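/- Under Assumption (a), the convex function v : Σ_m → ℝ defined by v(r) := sup_{p ∈ ℝ^{Z_m}} [ Ξ_μ(p) − Σ_{z∈Z_m} p_z r_z ] is strictly convex on Σ_m: for all r_1 ≠ r_2 in Σ_m one has v((r_1+r_2)/2) < (v(r_1)+v(r_2))/2. -/

import Mathlib

open MeasureTheory
set_option linter.unusedSectionVars false
set_option maxHeartbeats 1000000

namespace Stmt8

variable {X : Type*} [MeasurableSpace X] [TopologicalSpace X] [OpensMeasurableSpace X]
variable {ι : Type*} [Fintype ι] [Nonempty ι]

noncomputable def xi (c : X → ι → ℝ) (p : ι → ℝ) (x : X) : ℝ := ⨅ z, c x z + p z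

lemma bddB (f : ι → ℝ) : BddBelow (Set.range f) := (Set.finite_range f).bddBelow

lemma xi_le (c : X → ι → ℝ) (p : ι → ℝ) (x : X) (z : ι) : xi c p x ≤ c x z + p z :=
  ciInf_le (bddB _) z

lemma le_xi {c : X → ι → ℝ} {p : ι → ℝ} {x : X} {b : ℝ} (h : ∀ z, b ≤ c x z + p z) :
    b ≤ xi c p x := le_ciInf h

lemma xi_mono {c : X → ι → ℝ} {p q : ι → ℝ} (h : ∀ z, p z ≤ q z) (x : X) :
    xi c p x ≤ xi c q x :=
  le_xi fun z => (xi_le c p x z).trans (by linarith [h z])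

lemma abs_xi_le {c : X → ι → ℝ} {M0 : ℝ} (hM0 : ∀ x z, |c x z| ≤ M0)
    {p : ι → ℝ} {C : ℝ} (hC : ∀ z, |p z| ≤ C) (x : X) : |xi c p x| ≤ M0 + C := by
  have z0 : ι := Classical.arbitrary ι
  rw [abs_le]
  constructor
  · refine le_xi fun z => ?_
    have h1 := abs_le.mp (hM0 x z); have h2 := abs_le.mp (hC z); linarith [h1.1, h2.1]
  · refine (xi_le c p x (Classical.arbitrary ι)).trans ?_
    have h1 := abs_le.mp (hM0 x (Classical.arbitrary ι))
    have h2 := abs_le.mp (hC (Classical.arbitrary ι))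
    linarith [h1.2, h2.2]

lemma continuous_xi {c : X → ι → ℝ} (hc : ∀ z, Continuous fun x => c x z) (p : ι → ℝ) :
    Continuous (xi c p) := by
  have h : xi c p = fun x => Finset.univ.inf' Finset.univ_nonempty (fun z => c x z + p z) := by
    funext x
    rw [Finset.inf'_univ_eq_ciInf]
    rfl
  rw [h]
  exact Continuous.finset_inf'_apply _ fun z _ => (hc z).add continuous_const

lemma integrable_xi (μ : Measure X) [IsFiniteMeasure μ] {c : X → ι → ℝ}
    (hc : ∀ z, Continuous fun x => c x z) {M0 : ℝ} (hM0 : ∀ x z, |c x z| ≤ M0)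
    (p : ι → ℝ) : Integrable (xi c p) μ := by
  obtain ⟨C, hC⟩ : ∃ C, ∀ z, |p z| ≤ C :=
    ⟨Finset.univ.sup' Finset.univ_nonempty (fun z => |p z|),
      fun z => Finset.le_sup' (fun z => |p z|) (Finset.mem_univ z)⟩
  refine (integrable_const (M0 + C)).mono' ((continuous_xi hc p).aestronglyMeasurable) ?_
  exact Filter.Eventually.of_forall fun x => by
    rw [Real.norm_eq_abs]; exact abs_xi_le hM0 hC x

noncomputable def Xi (μ : Measure X) (c : X → ι → ℝ) (p : ι → ℝ) : ℝ := ∫ x, xi c p x ∂μ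

noncomputable def ff (μ : Measure X) (c : X → ι → ℝ) (r p : ι → ℝ) : ℝ :=
  Xi μ c p - ∑ z, p z * r z


lemma exists_xi_eq (c : X → ι → ℝ) (p : ι → ℝ) (x : X) : ∃ z, xi c p x = c x z + p z := by
  obtain ⟨z, hz⟩ := exists_eq_ciInf_of_finite (f := fun z => c x z + p z)
  exact ⟨z, le_antisymm (xi_le c p x z) (hz ▸ le_xi fun w => ciInf_le (Set.finite_range _).bddBelow w)⟩

lemma integrable_c (μ : Measure X) [IsFiniteMeasure μ] {c : X → ι → ℝ}
    (hc : ∀ z, Continuous fun x => c x z) {M0 : ℝ} (hM0 : ∀ x z, |c x z| ≤ M0) (z : ι) :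
    Integrable (fun x => c x z) μ :=
  (integrable_const M0).mono' (hc z).aestronglyMeasurable
    (Filter.Eventually.of_forall fun x => by rw [Real.norm_eq_abs]; exact hM0 x z)

lemma ff_le (μ : Measure X) [IsProbabilityMeasure μ] {c : X → ι → ℝ}
    (hc : ∀ z, Continuous fun x => c x z) {M0 : ℝ} (hM0 : ∀ x z, |c x z| ≤ M0)
    {r : ι → ℝ} (hr0 : ∀ z, 0 ≤ r z) (hr1 : ∑ z, r z = 1) (p : ι → ℝ) :
    ff μ c r p ≤ M0 := by
  have hic := integrable_c μ hc hM0 (ι := ι)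
  have step : ∀ x, xi c p x ≤ ∑ z, r z * (c x z + p z) := fun x => by
    have h1 : xi c p x = ∑ z, r z * xi c p x := by rw [← Finset.sum_mul, hr1, one_mul]
    rw [h1]
    exact Finset.sum_le_sum fun z _ => mul_le_mul_of_nonneg_left (xi_le c p x z) (hr0 z)
  have hXi : Xi μ c p ≤ ∑ z, r z * ((∫ x, c x z ∂μ) + p z) := by
    have h2 : Xi μ c p ≤ ∫ x, ∑ z, r z * (c x z + p z) ∂μ := by
      refine integral_mono (integrable_xi μ hc hM0 p) ?_ step
      exact integrable_finset_sum _ fun z _ =>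
        (((hic z).add (integrable_const (p z))).const_mul (r z))
    refine h2.trans_eq ?_
    have h3 : ∫ x, ∑ z, r z * (c x z + p z) ∂μ = ∑ z, ∫ x, r z * (c x z + p z) ∂μ :=
      integral_finset_sum _ fun z _ => (((hic z).add (integrable_const (p z))).const_mul (r z))
    rw [h3]
    refine Finset.sum_congr rfl fun z _ => ?_
    rw [MeasureTheory.integral_const_mul, integral_add (hic z) (integrable_const (p z)), integral_const]
    simp
  have hI : ∀ z, (∫ x, c x z ∂μ) ≤ M0 := fun z => by
    have := integral_mono (hic z) (integrable_const M0)
      (fun x => (abs_le.mp (hM0 x z)).2)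
    simpa using this
  have : ff μ c r p ≤ ∑ z, r z * (∫ x, c x z ∂μ) := by
    unfold ff
    have : ∑ z, r z * ((∫ x, c x z ∂μ) + p z)
        = (∑ z, r z * (∫ x, c x z ∂μ)) + ∑ z, p z * r z := by
      rw [← Finset.sum_add_distrib]; exact Finset.sum_congr rfl fun z _ => by ring
    linarith [hXi, this.symm ▸ hXi]
  refine this.trans ?_
  calc ∑ z, r z * (∫ x, c x z ∂μ) ≤ ∑ z, r z * M0 :=
        Finset.sum_le_sum fun z _ => mul_le_mul_of_nonneg_left (hI z) (hr0 z)
    _ = M0 := by rw [← Finset.sum_mul, hr1, one_mul]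

lemma bddAbove_ff (μ : Measure X) [IsProbabilityMeasure μ] {c : X → ι → ℝ}
    (hc : ∀ z, Continuous fun x => c x z) {M0 : ℝ} (hM0 : ∀ x z, |c x z| ≤ M0)
    {r : ι → ℝ} (hr0 : ∀ z, 0 ≤ r z) (hr1 : ∑ z, r z = 1) :
    BddAbove (Set.range (ff μ c r)) :=
  ⟨M0, by rintro _ ⟨p, rfl⟩; exact ff_le μ hc hM0 hr0 hr1 p⟩

lemma xi_shift (c : X → ι → ℝ) (p : ι → ℝ) (t : ℝ) (x : X) :
    xi c (fun z => p z + t) x = xi c p x + t := by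
  apply le_antisymm
  · obtain ⟨z, hz⟩ := exists_xi_eq c p x
    exact (xi_le c _ x z).trans (by rw [hz]; ring_nf; exact le_refl _)
  · refine le_xi fun z => ?_
    have := xi_le c p x z
    linarith

lemma Xi_shift (μ : Measure X) [IsProbabilityMeasure μ] {c : X → ι → ℝ}
    (hc : ∀ z, Continuous fun x => c x z) {M0 : ℝ} (hM0 : ∀ x z, |c x z| ≤ M0)
    (p : ι → ℝ) (t : ℝ) : Xi μ c (fun z => p z + t) = Xi μ c p + t := by
  unfold Xi
  rw [show (fun x => xi c (fun z => p z + t) x) = fun x => xi c p x + t from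
    funext (xi_shift c p t)]
  rw [integral_add (integrable_xi μ hc hM0 p) (integrable_const t), integral_const]
  simp

lemma ff_shift (μ : Measure X) [IsProbabilityMeasure μ] {c : X → ι → ℝ}
    (hc : ∀ z, Continuous fun x => c x z) {M0 : ℝ} (hM0 : ∀ x z, |c x z| ≤ M0)
    {r : ι → ℝ} (hr1 : ∑ z, r z = 1) (p : ι → ℝ) (t : ℝ) :
    ff μ c r (fun z => p z + t) = ff μ c r p := by
  unfold ff
  rw [Xi_shift μ hc hM0 p t]
  have : ∑ z, (p z + t) * r z = (∑ z, p z * r z) + t := by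
    simp only [add_mul, Finset.sum_add_distrib, ← Finset.mul_sum, hr1, mul_one]
  rw [this]; ring

lemma continuous_Xi (μ : Measure X) [IsProbabilityMeasure μ] {c : X → ι → ℝ}
    (hc : ∀ z, Continuous fun x => c x z) {M0 : ℝ} (hM0 : ∀ x z, |c x z| ≤ M0) :
    Continuous (Xi μ c) := by
  have key : ∀ p q : ι → ℝ, ∀ x, xi c p x ≤ xi c q x + dist p q := by
    intro p q x
    obtain ⟨z, hz⟩ := exists_xi_eq c q x
    have h1 := xi_le c p x z
    have h2 : dist (p z) (q z) ≤ dist p q := dist_le_pi_dist p q z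
    rw [Real.dist_eq] at h2
    have h3 := abs_le.mp h2
    rw [hz]
    linarith [h3.2]
  have lip : LipschitzWith 1 (Xi μ c) := by
    refine LipschitzWith.of_dist_le_mul fun p q => ?_
    rw [NNReal.coe_one, one_mul, Real.dist_eq, abs_le]
    have main : ∀ p q : ι → ℝ, Xi μ c p ≤ Xi μ c q + dist p q := by
      intro p q
      have h2 : Integrable (fun x => xi c q x + dist p q) μ :=
        (integrable_xi μ hc hM0 q).add (integrable_const _)
      have := integral_mono (integrable_xi μ hc hM0 p) h2 (fun x => key p q x)
      rw [integral_add (integrable_xi μ hc hM0 q) (integrable_const _), integral_const] at this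
      simp only [measure_univ, probReal_univ, ENNReal.toReal_one, smul_eq_mul, one_mul] at this
      unfold Xi; linarith
    constructor
    · have := main q p; rw [dist_comm] at this; linarith
    · have := main p q; linarith
  exact lip.continuous


lemma exists_max (μ : Measure X) [IsProbabilityMeasure μ] {c : X → ι → ℝ}
    (hc : ∀ z, Continuous fun x => c x z) {M0 : ℝ} (hM0 : ∀ x z, |c x z| ≤ M0)
    {r : ι → ℝ} (hr0 : ∀ z, 0 < r z) (hr1 : ∑ z, r z = 1) :
    ∃ pb, ∀ p, ff μ c r p ≤ ff μ c r pb := by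
  have hXne : Nonempty X := by
    by_contra h
    rw [not_nonempty_iff] at h
    have h1 : μ Set.univ = 1 := measure_univ
    rw [Set.univ_eq_empty_iff.mpr h, measure_empty] at h1
    exact zero_ne_one h1
  have hM0nn : 0 ≤ M0 :=
    le_trans (abs_nonneg _) (hM0 (Classical.arbitrary X) (Classical.arbitrary ι))
  set δ := Finset.univ.inf' Finset.univ_nonempty r with hδ
  have hδpos : 0 < δ := by
    obtain ⟨z, _, hz⟩ := Finset.exists_mem_eq_inf' Finset.univ_nonempty r
    rw [hδ, hz]; exact hr0 z
  have hδle : ∀ z, δ ≤ r z := fun z => Finset.inf'_le r (Finset.mem_univ z)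
  set R := (2 * M0 + 1) / δ with hR
  have hRpos : 0 < R := by positivity
  have hff0 : -M0 ≤ ff μ c r (fun _ => 0) := by
    unfold ff Xi
    have h1 : ∀ x, -M0 ≤ xi c (fun _ => 0) x := fun x =>
      le_xi fun z => by have := (abs_le.mp (hM0 x z)).1; linarith
    have h2 := integral_mono (integrable_const (-M0)) (integrable_xi μ hc hM0 _) h1
    rw [integral_const] at h2
    simp only [measure_univ, probReal_univ, ENNReal.toReal_one, smul_eq_mul, one_mul] at h2
    simp only [zero_mul, Finset.sum_const_zero, sub_zero]
    exact h2
  have decay : ∀ p : ι → ℝ, (∃ z1, p z1 = 0) → (∃ w, R ≤ |p w|) → ff μ c r p ≤ -M0 - 1 := by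
    rintro p ⟨z1, hz1⟩ ⟨w, hw⟩
    obtain ⟨zm, _, hzm⟩ := Finset.exists_mem_eq_inf' Finset.univ_nonempty p
    set m := Finset.univ.inf' Finset.univ_nonempty p with hm
    have hmle : ∀ z, m ≤ p z := fun z => Finset.inf'_le p (Finset.mem_univ z)
    have hm0 : m ≤ 0 := by have := hmle z1; rwa [hz1] at this
    have hXip : Xi μ c p ≤ M0 + m := by
      have h1 : ∀ x, xi c p x ≤ M0 + m := fun x => by
        refine (xi_le c p x zm).trans ?_
        have := (abs_le.mp (hM0 x zm)).2
        rw [← hzm]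
        linarith
      have h2 := integral_mono (integrable_xi μ hc hM0 p) (integrable_const (M0 + m)) h1
      rw [integral_const] at h2
      simp only [measure_univ, probReal_univ, ENNReal.toReal_one, smul_eq_mul, one_mul] at h2
      exact h2
    have hsum : ∀ w', m + δ * (p w' - m) ≤ ∑ z, p z * r z := by
      intro w'
      have e1 : ∑ z, (p z - m) * r z = (∑ z, p z * r z) - m := by
        simp only [sub_mul, Finset.sum_sub_distrib, ← Finset.mul_sum, hr1, mul_one]
      have e2 : (p w' - m) * r w' ≤ ∑ z, (p z - m) * r z :=
        Finset.single_le_sum (f := fun z => (p z - m) * r z)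
          (fun z _ => mul_nonneg (by linarith [hmle z]) (le_of_lt (hr0 z)))
          (Finset.mem_univ w')
      have e3 : δ * (p w' - m) ≤ (p w' - m) * r w' := by
        rw [mul_comm δ]
        exact mul_le_mul_of_nonneg_left (hδle w') (by linarith [hmle w'])
      linarith
    have key : ∃ w', R ≤ p w' - m := by
      rcases le_or_gt 0 (p w) with h | h
      · exact ⟨w, by rw [abs_of_nonneg h] at hw; linarith⟩
      · refine ⟨z1, ?_⟩
        rw [abs_of_neg h] at hw
        have := hmle w
        rw [hz1]
        linarith
    obtain ⟨w', hw'⟩ := key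
    have := hsum w'
    have hδR : δ * R ≤ δ * (p w' - m) := mul_le_mul_of_nonneg_left hw' (le_of_lt hδpos)
    have hδRval : δ * R = 2 * M0 + 1 := by
      rw [hR]
      field_simp
    unfold ff
    linarith
  -- compact set
  set K : Set (ι → ℝ) := Set.pi Set.univ (fun _ : ι => Set.Icc (-R) R) with hK
  have hKc : IsCompact K := isCompact_univ_pi (fun _ => isCompact_Icc)
  have h0K : (fun _ : ι => (0:ℝ)) ∈ K := by
    intro z _
    exact Set.mem_Icc.mpr ⟨by show -R ≤ (0:ℝ); linarith, by show (0:ℝ) ≤ R; linarith⟩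
  have hcont : Continuous (ff μ c r) := by
    unfold ff
    exact (continuous_Xi μ hc hM0).sub
      (continuous_finset_sum _ fun z _ => (continuous_apply z).mul continuous_const)
  obtain ⟨pb, hpbK, hpbmax⟩ := hKc.exists_isMaxOn ⟨_, h0K⟩ hcont.continuousOn
  refine ⟨pb, fun p => ?_⟩
  set z1 := Classical.arbitrary ι with hz1d
  set q : ι → ℝ := fun z => p z + (-(p z1)) with hq
  have hqp : ff μ c r q = ff μ c r p := ff_shift μ hc hM0 hr1 p (-(p z1))
  have hqz1 : q z1 = 0 := by rw [hq]; ring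
  by_cases hcase : ∀ z, |q z| ≤ R
  · have hqK : q ∈ K := fun z _ => Set.mem_Icc.mpr (abs_le.mp (hcase z))
    have h4 : ff μ c r q ≤ ff μ c r pb := hpbmax hqK
    rw [hqp] at h4
    exact h4
  · push_neg at hcase
    obtain ⟨w, hw⟩ := hcase
    have h1 := decay q ⟨z1, hqz1⟩ ⟨w, le_of_lt hw⟩
    have h2 := hpbmax h0K
    rw [← hqp]
    have h3 : ff μ c r (fun _ => 0) ≤ ff μ c r pb := h2
    linarith

lemma grad (μ : Measure X) [IsProbabilityMeasure μ] [DecidableEq ι] {c : X → ι → ℝ}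
    (hc : ∀ z, Continuous fun x => c x z) {M0 : ℝ} (hM0 : ∀ x z, |c x z| ≤ M0)
    (hlevel : ∀ (t : ℝ) (z z' : ι), z ≠ z' → μ {x | c x z - c x z' = t} = 0)
    {r pb : ι → ℝ} (hmax : ∀ p, ff μ c r p ≤ ff μ c r pb) (z0 : ι) :
    r z0 = (μ {x | ∀ z, z ≠ z0 → c x z0 + pb z0 < c x z + pb z}).toReal := by
  set A : Set X := {x | ∀ z, z ≠ z0 → c x z0 + pb z0 < c x z + pb z} with hA
  set Ab : Set X := {x | ∀ z, z ≠ z0 → c x z0 + pb z0 ≤ c x z + pb z} with hAb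
  set B : ℝ → Set X := fun t => {x | ∀ z, z ≠ z0 → c x z0 + pb z0 + t < c x z + pb z} with hB
  set E : ℝ → Set X := fun t => {x | ∀ z, z ≠ z0 → c x z0 + pb z0 < c x z + pb z + t} with hE
  have hmB : ∀ t, MeasurableSet (B t) := by
    intro t
    have : B t = ⋂ z, ⋂ (_ : z ≠ z0), {x | c x z0 + pb z0 + t < c x z + pb z} := by
      ext x; simp [hB, Set.mem_iInter, Set.mem_setOf_eq]
    rw [this]
    exact MeasurableSet.iInter fun z => MeasurableSet.iInter fun _ =>
      measurableSet_lt ((((hc z0).measurable).add_const (pb z0)).add_const t)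
        (((hc z).measurable).add_const (pb z))
  have hmE : ∀ t, MeasurableSet (E t) := by
    intro t
    have : E t = ⋂ z, ⋂ (_ : z ≠ z0), {x | c x z0 + pb z0 < c x z + pb z + t} := by
      ext x; simp [hE, Set.mem_iInter, Set.mem_setOf_eq]
    rw [this]
    exact MeasurableSet.iInter fun z => MeasurableSet.iInter fun _ =>
      measurableSet_lt (((hc z0).measurable).add_const (pb z0))
        ((((hc z).measurable).add_const (pb z)).add_const t)
  -- sum computation
  have hsum : ∀ s : ℝ, ∑ z, (pb z + (if z = z0 then s else 0)) * r z
      = (∑ z, pb z * r z) + s * r z0 := by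
    intro s
    simp only [add_mul, Finset.sum_add_distrib, ite_mul, zero_mul]
    congr 1
    rw [Finset.sum_ite_eq' Finset.univ z0 (fun z => s * r z)]
    simp
  -- upper estimate
  have upper : ∀ t : ℝ, 0 < t → (μ (B t)).toReal ≤ r z0 := by
    intro t ht
    set pt : ι → ℝ := fun z => pb z + (if z = z0 then t else 0) with hpt
    have hXile : Xi μ c pt - Xi μ c pb ≤ t * r z0 := by
      have h := hmax pt
      unfold ff at h
      have hs := hsum t
      rw [hpt] at *
      linarith [hs ▸ h]
    have hpt_ge : ∀ x, Set.indicator (B t) (fun _ => t) x ≤ xi c pt x - xi c pb x := by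
      intro x
      by_cases hx : x ∈ B t
      · rw [Set.indicator_of_mem hx]
        have h1 : xi c pb x ≤ c x z0 + pb z0 := xi_le c pb x z0
        have h2 : c x z0 + pb z0 + t ≤ xi c pt x := by
          refine le_xi fun z => ?_
          have hzz : pt z = pb z + (if z = z0 then t else 0) := rfl
          rw [hzz]
          by_cases hz : z = z0
          · subst hz; rw [if_pos rfl]; linarith
          · have h3 := hx z hz
            rw [if_neg hz]
            linarith
        linarith
      · rw [Set.indicator_of_notMem hx]
        have := xi_mono (c := c) (p := pb) (q := pt)
          (fun z => by
            have hzz : pt z = pb z + (if z = z0 then t else 0) := rfl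
            rw [hzz]; split <;> linarith) x
        linarith
    have hint : t * (μ (B t)).toReal ≤ Xi μ c pt - Xi μ c pb := by
      have hi1 : Integrable (Set.indicator (B t) (fun _ => t)) μ :=
        (integrable_const t).indicator (hmB t)
      have hi2 : Integrable (fun x => xi c pt x - xi c pb x) μ :=
        (integrable_xi μ hc hM0 pt).sub (integrable_xi μ hc hM0 pb)
      have h4 := integral_mono hi1 hi2 hpt_ge
      rw [integral_indicator_const _ (hmB t),
        integral_sub (integrable_xi μ hc hM0 pt) (integrable_xi μ hc hM0 pb)] at h4
      rw [smul_eq_mul, mul_comm] at h4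
      exact h4
    exact le_of_mul_le_mul_left (hint.trans hXile) ht
  have hr0nn : 0 ≤ r z0 := le_trans ENNReal.toReal_nonneg (upper 1 one_pos)
  -- lower estimate
  have lower : ∀ t : ℝ, 0 < t → r z0 ≤ (μ (E t)).toReal := by
    intro t ht
    set pt : ι → ℝ := fun z => pb z + (if z = z0 then -t else 0) with hpt
    have hXile : t * r z0 ≤ Xi μ c pb - Xi μ c pt := by
      have h := hmax pt
      unfold ff at h
      have hs := hsum (-t)
      rw [hpt] at *
      have h5 := hs ▸ h
      linarith [h5]
    have hpt_ge : ∀ x, xi c pb x - xi c pt x ≤ Set.indicator (E t) (fun _ => t) x := by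
      intro x
      by_cases hx : x ∈ E t
      · rw [Set.indicator_of_mem hx]
        have h2 : xi c pb x - t ≤ xi c pt x := by
          refine le_xi fun z => ?_
          have := xi_le c pb x z
          have hzz : pt z = pb z + (if z = z0 then -t else 0) := rfl
          rw [hzz]
          split <;> linarith
        linarith
      · rw [Set.indicator_of_notMem hx]
        have hx' : ∃ w, w ≠ z0 ∧ c x w + pb w + t ≤ c x z0 + pb z0 := by
          have : ¬ ∀ z, z ≠ z0 → c x z0 + pb z0 < c x z + pb z + t := hx
          push_neg at this
          obtain ⟨w, hw1, hw2⟩ := this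
          exact ⟨w, hw1, by linarith⟩
        obtain ⟨w, hw1, hw2⟩ := hx'
        have h2 : xi c pb x ≤ xi c pt x := by
          refine le_xi fun z => ?_
          have hzz : pt z = pb z + (if z = z0 then -t else 0) := rfl
          rw [hzz]
          by_cases hz : z = z0
          · subst hz
            have := xi_le c pb x w
            rw [if_pos rfl]
            linarith
          · have := xi_le c pb x z
            rw [if_neg hz]
            linarith
        linarith
    have hint : Xi μ c pb - Xi μ c pt ≤ t * (μ (E t)).toReal := by
      have hi1 : Integrable (Set.indicator (E t) (fun _ => t)) μ :=
        (integrable_const t).indicator (hmE t)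
      have hi2 : Integrable (fun x => xi c pb x - xi c pt x) μ :=
        (integrable_xi μ hc hM0 pb).sub (integrable_xi μ hc hM0 pt)
      have h4 := integral_mono hi2 hi1 hpt_ge
      rw [integral_indicator_const _ (hmE t),
        integral_sub (integrable_xi μ hc hM0 pb) (integrable_xi μ hc hM0 pt)] at h4
      rw [smul_eq_mul, mul_comm] at h4
      exact h4
    exact le_of_mul_le_mul_left (hXile.trans hint) ht
  -- union identity
  have hAeq : A = ⋃ n : ℕ, B (1/(n+1)) := by
    ext x
    constructor
    · intro hx
      by_cases hex : ∃ z : ι, z ≠ z0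
      · set s := Finset.univ.filter (fun z => z ≠ z0) with hsdef
        have hsne : s.Nonempty := by
          obtain ⟨z, hz⟩ := hex
          exact ⟨z, by simp [hsdef, hz]⟩
        set g := fun z => c x z + pb z - (c x z0 + pb z0) with hg
        have hmpos : 0 < s.inf' hsne g := by
          obtain ⟨z, hz, he⟩ := Finset.exists_mem_eq_inf' hsne g
          rw [he]
          have hzne : z ≠ z0 := by simpa [hsdef] using hz
          have := hx z hzne
          simp only [hg]
          linarith
        obtain ⟨n, hn⟩ := exists_nat_one_div_lt hmpos
        refine Set.mem_iUnion.mpr ⟨n, fun z hz => ?_⟩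
        have h1 : s.inf' hsne g ≤ g z := Finset.inf'_le g (by simp [hsdef, hz])
        simp only [hg] at h1
        have hn' : (1:ℝ)/((n:ℝ)+1) < s.inf' hsne g := by exact_mod_cast hn
        linarith
      · push_neg at hex
        exact Set.mem_iUnion.mpr ⟨0, fun z hz => absurd (hex z) hz⟩
    · intro hx z hz
      obtain ⟨n, hn⟩ := Set.mem_iUnion.mp hx
      have h1 := hn z hz
      have h2 : 0 < 1/((n:ℝ)+1) := by positivity
      linarith
  have hmono : Monotone (fun n : ℕ => B (1/((n:ℝ)+1))) := by
    intro n m hnm x hx z hz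
    have h1 := hx z hz
    have h2 : 1/((m:ℝ)+1) ≤ 1/((n:ℝ)+1) := by
      apply one_div_le_one_div_of_le
      · positivity
      · have : (n:ℝ) ≤ m := by exact_mod_cast hnm
        linarith
    linarith
  have hA_le : (μ A).toReal ≤ r z0 := by
    have h1 : μ A = ⨆ n : ℕ, μ (B (1/((n:ℝ)+1))) := by
      rw [hAeq]
      exact_mod_cast hmono.measure_iUnion
    have h2 : μ A ≤ ENNReal.ofReal (r z0) := by
      rw [h1]
      exact iSup_le fun n =>
        (ENNReal.le_ofReal_iff_toReal_le (measure_ne_top μ _) hr0nn).mpr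
          (upper _ (by positivity))
    calc (μ A).toReal ≤ (ENNReal.ofReal (r z0)).toReal :=
          ENNReal.toReal_mono ENNReal.ofReal_ne_top h2
      _ = r z0 := ENNReal.toReal_ofReal hr0nn
  -- intersection identity
  have hAbeq : Ab = ⋂ n : ℕ, E (1/((n:ℝ)+1)) := by
    ext x
    constructor
    · intro hx
      refine Set.mem_iInter.mpr fun n z hz => ?_
      have h1 := hx z hz
      have h2 : 0 < 1/((n:ℝ)+1) := by positivity
      linarith
    · intro hx z hz
      by_contra hcon
      push_neg at hcon
      obtain ⟨n, hn⟩ := exists_nat_one_div_lt (show 0 < c x z0 + pb z0 - (c x z + pb z) by linarith)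
      have h1 := Set.mem_iInter.mp hx n z hz
      have hn' : (1:ℝ)/((n:ℝ)+1) < c x z0 + pb z0 - (c x z + pb z) := by exact_mod_cast hn
      linarith
  have hanti : Antitone (fun n : ℕ => E (1/((n:ℝ)+1))) := by
    intro n m hnm x hx z hz
    have h1 := hx z hz
    have h2 : 1/((m:ℝ)+1) ≤ 1/((n:ℝ)+1) := by
      apply one_div_le_one_div_of_le
      · positivity
      · have : (n:ℝ) ≤ m := by exact_mod_cast hnm
        linarith
    linarith
  have hAb_ge : r z0 ≤ (μ Ab).toReal := by
    have h1 : μ Ab = ⨅ n : ℕ, μ (E (1/((n:ℝ)+1))) := by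
      rw [hAbeq]
      exact hanti.measure_iInter (fun n => (hmE _).nullMeasurableSet) ⟨0, measure_ne_top μ _⟩
    have h2 : ENNReal.ofReal (r z0) ≤ μ Ab := by
      rw [h1]
      exact le_iInf fun n =>
        (ENNReal.ofReal_le_iff_le_toReal (measure_ne_top μ _)).mpr (lower _ (by positivity))
    exact (ENNReal.ofReal_le_iff_le_toReal (measure_ne_top μ _)).mp h2
  -- null boundary
  have hnull : μ (Ab \ A) = 0 := by
    have hsub : Ab \ A ⊆ ⋃ w ∈ {w : ι | w ≠ z0}, {x | c x z0 - c x w = pb w - pb z0} := by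
      rintro x ⟨hab, ha⟩
      have : ¬ ∀ z, z ≠ z0 → c x z0 + pb z0 < c x z + pb z := ha
      push_neg at this
      obtain ⟨w, hw1, hw2⟩ := this
      have h1 := hab w hw1
      refine Set.mem_iUnion₂.mpr ⟨w, hw1, ?_⟩
      simp only [Set.mem_setOf_eq]
      linarith
    refine measure_mono_null hsub ?_
    exact (measure_biUnion_null_iff (Set.to_countable _)).mpr
      fun w hw => hlevel (pb w - pb z0) z0 w (Ne.symm hw)
  have hABm : μ Ab = μ A := by
    refine le_antisymm ?_ (measure_mono fun x hx z hz => le_of_lt (hx z hz))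
    calc μ Ab ≤ μ (A ∪ (Ab \ A)) := measure_mono (fun x hx => by
          by_cases hxa : x ∈ A
          · exact Or.inl hxa
          · exact Or.inr ⟨hx, hxa⟩)
      _ ≤ μ A + μ (Ab \ A) := measure_union_le _ _
      _ = μ A := by rw [hnull, add_zero]
  refine le_antisymm ?_ hA_le
  rw [← hABm]
  exact hAb_ge

lemma main (μ : Measure X) [IsProbabilityMeasure μ] [DecidableEq ι] {c : X → ι → ℝ}
    (hc : ∀ z, Continuous fun x => c x z) {M0 : ℝ} (hM0 : ∀ x z, |c x z| ≤ M0)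
    (hlevel : ∀ (t : ℝ) (z z' : ι), z ≠ z' → μ {x | c x z - c x z' = t} = 0)
    {r1 r2 : ι → ℝ} (h10 : ∀ z, 0 ≤ r1 z) (h11 : ∑ z, r1 z = 1)
    (h20 : ∀ z, 0 ≤ r2 z) (h21 : ∑ z, r2 z = 1)
    (hpos : ∀ z, 0 < (r1 z + r2 z) / 2) (hne : r1 ≠ r2) :
    (⨆ p, ff μ c (fun z => (r1 z + r2 z)/2) p)
      < ((⨆ p, ff μ c r1 p) + (⨆ p, ff μ c r2 p)) / 2 := by
  set rb : ι → ℝ := fun z => (r1 z + r2 z)/2 with hrb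
  have hrb0 : ∀ z, 0 ≤ rb z := fun z => le_of_lt (hpos z)
  have hrb1 : ∑ z, rb z = 1 := by
    have h : ∑ z, rb z = ((∑ z, r1 z) + ∑ z, r2 z)/2 := by
      simp only [hrb]
      rw [← Finset.sum_div, Finset.sum_add_distrib]
    rw [h, h11, h21]; norm_num
  have bdd1 := bddAbove_ff μ hc hM0 h10 h11
  have bdd2 := bddAbove_ff μ hc hM0 h20 h21
  have bddb := bddAbove_ff μ hc hM0 hrb0 hrb1
  have hsplit : ∀ p, ff μ c rb p = (ff μ c r1 p + ff μ c r2 p)/2 := by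
    intro p
    unfold ff
    have h : ∑ z, p z * rb z = ((∑ z, p z * r1 z) + ∑ z, p z * r2 z)/2 := by
      calc ∑ z, p z * rb z = ∑ z, (p z * r1 z + p z * r2 z)/2 :=
            Finset.sum_congr rfl fun z _ => by simp only [hrb]; ring
        _ = ((∑ z, p z * r1 z) + ∑ z, p z * r2 z)/2 := by
            rw [← Finset.sum_div, Finset.sum_add_distrib]
    rw [h]; ring
  by_contra hcon
  push_neg at hcon
  obtain ⟨pb, hpb⟩ := exists_max μ hc hM0 hpos hrb1
  have hSb : (⨆ p, ff μ c rb p) = ff μ c rb pb :=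
    le_antisymm (ciSup_le hpb) (le_ciSup bddb pb)
  have hle1 : ff μ c r1 pb ≤ ⨆ p, ff μ c r1 p := le_ciSup bdd1 pb
  have hle2 : ff μ c r2 pb ≤ ⨆ p, ff μ c r2 p := le_ciSup bdd2 pb
  have hconv : (⨆ p, ff μ c rb p) ≤ ((⨆ p, ff μ c r1 p) + (⨆ p, ff μ c r2 p))/2 := by
    refine ciSup_le fun p => ?_
    rw [hsplit p]
    have e1 := le_ciSup bdd1 p
    have e2 := le_ciSup bdd2 p
    have e3 : ff μ c r1 p ≤ ⨆ p, ff μ c r1 p := e1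
    have e4 : ff μ c r2 p ≤ ⨆ p, ff μ c r2 p := e2
    linarith
  have heq : ff μ c rb pb = ((⨆ p, ff μ c r1 p) + (⨆ p, ff μ c r2 p))/2 := by
    rw [← hSb]
    linarith
  have hs := hsplit pb
  have h1eq : ff μ c r1 pb = ⨆ p, ff μ c r1 p := by linarith [heq, hs, hle1, hle2]
  have h2eq : ff μ c r2 pb = ⨆ p, ff μ c r2 p := by linarith [heq, hs, hle1, hle2]
  have h1max : ∀ p, ff μ c r1 p ≤ ff μ c r1 pb := fun p => by
    rw [h1eq]; exact le_ciSup bdd1 p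
  have h2max : ∀ p, ff μ c r2 p ≤ ff μ c r2 pb := fun p => by
    rw [h2eq]; exact le_ciSup bdd2 p
  exact hne (funext fun z0 =>
    (grad μ hc hM0 hlevel h1max z0).trans (grad μ hc hM0 hlevel h2max z0).symm)

lemma sum_subtype_eq (P : ι → Prop) [DecidablePred P] (g : ι → ℝ)
    (hg : ∀ z, ¬ P z → g z = 0) : ∑ z, g z = ∑ s : {z // P z}, g s.1 := by
  rw [← Finset.sum_filter_add_sum_filter_not Finset.univ P g]
  have h1 : ∑ z ∈ Finset.univ.filter (fun z => ¬ P z), g z = 0 :=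
    Finset.sum_eq_zero fun z hz => hg z (Finset.mem_filter.mp hz).2
  have h2 : ∑ z ∈ Finset.univ.filter P, g z = ∑ s : {z // P z}, g s.1 :=
    Finset.sum_subtype _ (by simp) g
  rw [h1, h2, add_zero]

lemma restrict_sup (μ : Measure X) [IsProbabilityMeasure μ] {c : X → ι → ℝ}
    (hc : ∀ z, Continuous fun x => c x z) {M0 : ℝ} (hM0 : ∀ x z, |c x z| ≤ M0)
    (P : ι → Prop) [DecidablePred P] [Nonempty {z // P z}]
    {r : ι → ℝ} (hr0 : ∀ z, 0 ≤ r z) (hr1 : ∑ z, r z = 1)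
    (hsupp : ∀ z, ¬ P z → r z = 0) :
    (⨆ p : ι → ℝ, ff μ c r p)
      = ⨆ q : {z // P z} → ℝ, ff μ (fun x s => c x s.1) (fun s => r s.1) q := by
  set cS : X → {z // P z} → ℝ := fun x s => c x s.1 with hcSdef
  have hcS : ∀ s : {z // P z}, Continuous fun x => cS x s := fun s => hc s.1
  have hM0S : ∀ x (s : {z // P z}), |cS x s| ≤ M0 := fun x s => hM0 x s.1
  have hr0S : ∀ s : {z // P z}, 0 ≤ r s.1 := fun s => hr0 s.1
  have hr1S : ∑ s : {z // P z}, r s.1 = 1 := by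
    rw [← sum_subtype_eq P r hsupp]; exact hr1
  have bddI := bddAbove_ff μ hc hM0 hr0 hr1
  have bddS := bddAbove_ff μ hcS hM0S hr0S hr1S
  apply le_antisymm
  · refine ciSup_le fun p => ?_
    have hle : ff μ c r p ≤ ff μ cS (fun s => r s.1) (fun s => p s.1) := by
      unfold ff Xi
      have hsumeq : ∑ z, p z * r z = ∑ s : {z // P z}, p s.1 * r s.1 :=
        sum_subtype_eq P _ (fun z hz => by
          show p z * r z = 0
          rw [hsupp z hz, mul_zero])
      rw [hsumeq]
      have hptle : ∀ x, xi c p x ≤ xi cS (fun s => p s.1) x := fun x =>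
        le_xi fun s => xi_le c p x s.1
      have := integral_mono (integrable_xi μ hc hM0 p)
        (integrable_xi μ hcS hM0S (fun s => p s.1)) hptle
      linarith
    exact hle.trans (le_ciSup bddS _)
  · refine ciSup_le fun q => ?_
    set CM : ℝ := Finset.univ.sup' Finset.univ_nonempty (fun s : {z // P z} => |q s|)
      with hCM
    have hCMle : ∀ s, |q s| ≤ CM := fun s =>
      Finset.le_sup' (fun s => |q s|) (Finset.mem_univ s)
    set p : ι → ℝ := fun z => if h : P z then q ⟨z, h⟩ else M0 + M0 + CM + 1 with hp
    have hpz : ∀ (z) (h : P z), p z = q ⟨z, h⟩ := fun z h => dif_pos h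
    have hxieq : ∀ x, xi c p x = xi cS q x := by
      intro x
      apply le_antisymm
      · refine le_xi fun s => ?_
        have h1 := xi_le c p x s.1
        rw [hpz s.1 s.2] at h1
        exact h1
      · refine le_xi fun z => ?_
        by_cases h : P z
        · rw [hpz z h]
          exact xi_le cS q x ⟨z, h⟩
        · have hpz2 : p z = M0 + M0 + CM + 1 := dif_neg h
          rw [hpz2]
          have s0 : {z // P z} := Classical.arbitrary _
          have h1 : xi cS q x ≤ c x s0.1 + q s0 := xi_le cS q x s0
          have h2 := abs_le.mp (hCMle s0)
          have h3 := (abs_le.mp (hM0 x s0.1)).2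
          have h4 := (abs_le.mp (hM0 x z)).1
          linarith
    have hXieq : Xi μ c p = Xi μ cS q := by
      unfold Xi
      rw [show (fun x => xi c p x) = fun x => xi cS q x from funext hxieq]
    have hsumeq : ∑ z, p z * r z = ∑ s : {z // P z}, q s * r s.1 := by
      rw [sum_subtype_eq P (fun z => p z * r z) (fun z hz => by
        show p z * r z = 0
        rw [hsupp z hz, mul_zero])]
      exact Finset.sum_congr rfl fun s _ => by rw [hpz s.1 s.2]
    have heq : ff μ cS (fun s => r s.1) q = ff μ c r p := by
      unfold ff
      rw [hXieq, hsumeq]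
    rw [heq]
    exact le_ciSup bddI p

end Stmt8

/-- Under Assumption (a), the convex function
`v(r) := sup_p [Ξ_μ(p) − Σ_z p_z r_z]` is strictly convex on `Σ_m`. -/
theorem stmt_8
    {X : Type*} [TopologicalSpace X] [PolishSpace X] [MeasurableSpace X] [BorelSpace X]
    {ι : Type*} [Fintype ι] [Nonempty ι]
    (μ : Measure X) [IsProbabilityMeasure μ]
    (c1 : X → ι → ℝ)
    (hc1 : ∀ z, Continuous fun x => c1 x z) (hb1 : ∀ z, ∃ M, ∀ x, |c1 x z| ≤ M)
    (hatomless : ∀ x : X, μ {x} = 0)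
    (hlevel : ∀ (t : ℝ) (z z' : ι), z ≠ z' → μ {x | c1 x z - c1 x z' = t} = 0)
    (v : (ι → ℝ) → ℝ)
    (hv : ∀ r : ι → ℝ,
      v r = ⨆ p : ι → ℝ, ((∫ x, (⨅ z, c1 x z + p z) ∂μ) - ∑ z, p z * r z)) :
    ∀ r1 r2 : ι → ℝ,
      (∀ z, 0 ≤ r1 z) → (∑ z, r1 z) = 1 →
      (∀ z, 0 ≤ r2 z) → (∑ z, r2 z) = 1 →
      r1 ≠ r2 →
      v (fun z => (r1 z + r2 z) / 2) < (v r1 + v r2) / 2 := by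
  intro r1 r2 h10 h11 h20 h21 hne
  classical
  obtain ⟨M0, hM0⟩ : ∃ M0, ∀ x z, |c1 x z| ≤ M0 := by
    refine ⟨Finset.univ.sup' Finset.univ_nonempty (fun z => |Classical.choose (hb1 z)|),
      fun x z => ?_⟩
    have h1 := Classical.choose_spec (hb1 z) x
    have h2 : |Classical.choose (hb1 z)|
        ≤ Finset.univ.sup' Finset.univ_nonempty (fun z => |Classical.choose (hb1 z)|) :=
      Finset.le_sup' (fun z => |Classical.choose (hb1 z)|) (Finset.mem_univ z)
    exact h1.trans ((le_abs_self _).trans h2)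
  set P : ι → Prop := fun z => 0 < (r1 z + r2 z)/2 with hPdef
  have hPiff : ∀ z, ¬ P z → r1 z = 0 ∧ r2 z = 0 := by
    intro z hz
    simp only [hPdef, not_lt] at hz
    constructor <;> nlinarith [h10 z, h20 z]
  have hPex : ∃ z, P z := by
    by_contra h
    push_neg at h
    have hz : ∑ z, r1 z = 0 := Finset.sum_eq_zero fun z _ => (hPiff z (h z)).1
    rw [h11] at hz
    exact one_ne_zero hz
  haveI hSne : Nonempty {z // P z} := ⟨⟨Classical.choose hPex, Classical.choose_spec hPex⟩⟩
  have hsupp1 : ∀ z, ¬ P z → r1 z = 0 := fun z hz => (hPiff z hz).1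
  have hsupp2 : ∀ z, ¬ P z → r2 z = 0 := fun z hz => (hPiff z hz).2
  have hsuppb : ∀ z, ¬ P z → (r1 z + r2 z)/2 = 0 := fun z hz => by
    rw [hsupp1 z hz, hsupp2 z hz]; ring
  have hb0 : ∀ z, 0 ≤ (r1 z + r2 z)/2 := fun z => by nlinarith [h10 z, h20 z]
  have hb1' : ∑ z, (r1 z + r2 z)/2 = 1 := by
    have h : ∑ z, (r1 z + r2 z)/2 = ((∑ z, r1 z) + ∑ z, r2 z)/2 := by
      rw [← Finset.sum_div, Finset.sum_add_distrib]
    rw [h, h11, h21]; norm_num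
  have hcS : ∀ s : {z // P z}, Continuous fun x => c1 x s.1 := fun s => hc1 s.1
  have hM0S : ∀ x (s : {z // P z}), |c1 x s.1| ≤ M0 := fun x s => hM0 x s.1
  have hlevelS : ∀ (t : ℝ) (s s' : {z // P z}), s ≠ s' →
      μ {x | c1 x s.1 - c1 x s'.1 = t} = 0 := fun t s s' hss' =>
    hlevel t s.1 s'.1 (fun h => hss' (Subtype.ext h))
  have h10S : ∀ s : {z // P z}, 0 ≤ r1 s.1 := fun s => h10 s.1
  have h20S : ∀ s : {z // P z}, 0 ≤ r2 s.1 := fun s => h20 s.1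
  have h11S : ∑ s : {z // P z}, r1 s.1 = 1 := by
    rw [← Stmt8.sum_subtype_eq P r1 hsupp1]; exact h11
  have h21S : ∑ s : {z // P z}, r2 s.1 = 1 := by
    rw [← Stmt8.sum_subtype_eq P r2 hsupp2]; exact h21
  have hposS : ∀ s : {z // P z}, 0 < (r1 s.1 + r2 s.1)/2 := fun s => s.2
  have hneS : (fun s : {z // P z} => r1 s.1) ≠ (fun s : {z // P z} => r2 s.1) := by
    intro h
    apply hne
    funext z
    by_cases hz : P z
    · exact congrFun h ⟨z, hz⟩
    · rw [hsupp1 z hz, hsupp2 z hz]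
  have E1 : v r1 = ⨆ q : {z // P z} → ℝ,
      Stmt8.ff μ (fun x (s : {z // P z}) => c1 x s.1) (fun s => r1 s.1) q := by
    rw [hv r1]
    exact Stmt8.restrict_sup μ hc1 hM0 P h10 h11 hsupp1
  have E2 : v r2 = ⨆ q : {z // P z} → ℝ,
      Stmt8.ff μ (fun x (s : {z // P z}) => c1 x s.1) (fun s => r2 s.1) q := by
    rw [hv r2]
    exact Stmt8.restrict_sup μ hc1 hM0 P h20 h21 hsupp2
  have Eb : v (fun z => (r1 z + r2 z)/2) = ⨆ q : {z // P z} → ℝ,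
      Stmt8.ff μ (fun x (s : {z // P z}) => c1 x s.1)
        (fun s : {z // P z} => (r1 s.1 + r2 s.1)/2) q := by
    rw [hv (fun z => (r1 z + r2 z)/2)]
    exact Stmt8.restrict_sup μ hc1 hM0 P hb0 hb1' hsuppb
  rw [E1, E2, Eb]
  exact Stmt8.main μ hcS hM0S hlevelS h10S h11S h20S h21S hposS hneS
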